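/- Let m, n ≥ 3 be integers with gcd(m,n) > 1. Then Bob (the second player) has a winning strategy in the feedback game on the toroidal grid graph Q(m,n) with starting vertex (0,0). -/

import Mathlib

/-- `FeedbackWin st E u` : the player to move wins the feedback game with starting
vertex `st`, remaining (unused) edges `E`, and token currently on `u`.  The player
to move wins iff they can move the token along some remaining edge `{u, v}` (which
is then deleted) so that either `v` is the starting vertex `st`, or `v` is incident
with no remaining edge, or the resulting position is a loss for the opponent
(who is then the player to move).  This is a well-founded recursion on the finite
set of remaining edges. -/
def FeedbackWin {V : Type*} [DecidableEq V] (st : V) (E : Finset (Sym2 V)) (u : V) : Prop :=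
  ∃ v, ∃ _hmem : Sym2.mk u v ∈ E,
    v = st ∨ (∀ e ∈ E.erase (Sym2.mk u v), v ∉ e) ∨
      ¬ FeedbackWin st (E.erase (Sym2.mk u v)) v
termination_by E.card
decreasing_by exact Finset.card_erase_lt_of_mem _hmem

/-- Alice (the first player) has a winning strategy in the feedback game on the
finite graph `G` with starting vertex `st`. -/
def AliceWins {V : Type*} [Finite V] [DecidableEq V] (G : SimpleGraph V) (st : V) : Prop :=
  FeedbackWin st G.edgeSet.toFinite.toFinset st

/-- Bob (the second player) has a winning strategy in the feedback game on the
finite graph `G` with starting vertex `st`.  The feedback game is a finite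
two-player game without draws, so by Zermelo determinacy this is equivalent to
Alice not having a winning strategy. -/
def BobWins {V : Type*} [Finite V] [DecidableEq V] (G : SimpleGraph V) (st : V) : Prop :=
  ¬ AliceWins G st

/-- The toroidal grid graph `Q(m,n) = C_m □ C_n` on vertex set `ZMod m × ZMod n`:
`(a,b)` is adjacent to `(a',b')` iff either `a = a'` and `b' - b = ±1`, or `b = b'`
and `a' - a = ±1`. -/
def TorGraph (m n : ℕ) : SimpleGraph (ZMod m × ZMod n) :=
  SimpleGraph.fromRel fun p q =>
    (p.1 = q.1 ∧ q.2 = p.2 + 1) ∨ (p.2 = q.2 ∧ q.1 = p.1 + 1)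

lemma one_ne_zero_zmod (m : ℕ) (hm : 2 ≤ m) : (1 : ZMod m) ≠ 0 := by
  intro hc
  have := Nat.le_of_dvd one_pos ((ZMod.natCast_eq_zero_iff 1 m).mp (by exact_mod_cast hc))
  omega

lemma two_ne_zero_zmod (m : ℕ) (hm : 3 ≤ m) : (2 : ZMod m) ≠ 0 := by
  intro hc
  have := Nat.le_of_dvd two_pos ((ZMod.natCast_eq_zero_iff 2 m).mp (by exact_mod_cast hc))
  omega

open Classical in
lemma bob_aux {V : Type*} [DecidableEq V] {d : ℕ} (σ : V → ZMod d)
    (h1 : (1 : ZMod d) ≠ 0) (hneg : (-1 : ZMod d) ≠ 0)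
    (st : V) (hst : σ st = 0) :
    ∀ E : Finset (Sym2 V), ∀ u : V, σ u = 0 →
      (∀ e ∈ E, ∀ p q : V, e = Sym2.mk p q → σ q = σ p + 1 ∨ σ q = σ p - 1) →
      (∀ x : V, σ x ≠ 0 →
        Even (E.filter (fun e => ∃ w, e = Sym2.mk x w ∧ σ w = 0)).card) →
      ¬ FeedbackWin st E u := by
  intro E
  induction E using Finset.strongInduction with
  | _ E ih =>
  intro u hu hD hB hwin
  rw [FeedbackWin] at hwin
  obtain ⟨v, he, hcase⟩ := hwin
  -- σ v ≠ 0
  have hv0 : σ v ≠ 0 := by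
    rcases hD _ he u v rfl with h' | h' <;> rw [hu] at h'
    · rw [h', zero_add]; exact h1
    · rw [h', zero_sub]; exact hneg
  set P : V → Sym2 V → Prop := fun x e => ∃ w, e = Sym2.mk x w ∧ σ w = 0 with hP
  have hePv : P v (Sym2.mk u v) := ⟨u, Sym2.eq_swap, hu⟩
  have heX : Sym2.mk u v ∈ E.filter (P v) := Finset.mem_filter.mpr ⟨he, hePv⟩
  have hEvenv : Even ((E.filter (P v)).card) := hB v hv0
  -- the erased-filter has odd (hence positive) cardinality
  have hcard1 : ((E.erase (Sym2.mk u v)).filter (P v)).card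
      = (E.filter (P v)).card - 1 := by
    rw [Finset.filter_erase, Finset.card_erase_of_mem heX]
  have hpos : 0 < ((E.erase (Sym2.mk u v)).filter (P v)).card := by
    obtain ⟨k, hk⟩ := hEvenv
    have : 1 ≤ (E.filter (P v)).card := Finset.card_pos.mpr ⟨_, heX⟩
    omega
  obtain ⟨e', he'⟩ := Finset.card_pos.mp hpos
  have he'E : e' ∈ E.erase (Sym2.mk u v) := (Finset.mem_filter.mp he').1
  obtain ⟨w, hew, hw0⟩ := (Finset.mem_filter.mp he').2
  rcases hcase with hvst | hstr | hnwin
  · exact hv0 (hvst ▸ hst)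
  · exact hstr e' he'E (hew ▸ Sym2.mem_mk_left v w)
  · apply hnwin
    rw [FeedbackWin]
    refine ⟨w, hew ▸ he'E, Or.inr (Or.inr ?_)⟩
    set E1 := E.erase (Sym2.mk u v) with hE1
    have hsub : E1.erase (Sym2.mk v w) ⊂ E :=
      Finset.ssubset_of_subset_of_ssubset (Finset.erase_subset _ _)
        (Finset.erase_ssubset he)
    apply ih _ hsub w hw0
    · intro e2 he2 p q hpq
      exact hD e2 (Finset.mem_of_mem_erase (Finset.mem_of_mem_erase he2)) p q hpq
    · intro x hx
      by_cases hxv : x = v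
      · subst hxv
        have heq : (E1.erase (Sym2.mk x w)).filter (P x)
            = ((E.filter (P x)).erase (Sym2.mk u x)).erase (Sym2.mk x w) := by
          rw [Finset.filter_erase, hE1, Finset.filter_erase]
        have hmem2 : Sym2.mk x w ∈ (E.filter (P x)).erase (Sym2.mk u x) := by
          rw [← Finset.filter_erase]
          exact Finset.mem_filter.mpr ⟨hew ▸ he'E, ⟨w, rfl, hw0⟩⟩
        rw [heq, Finset.card_erase_of_mem hmem2, Finset.card_erase_of_mem heX]
        obtain ⟨k, hk⟩ : Even ((E.filter (P x)).card) := hB x hx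
        have h2 : 1 ≤ ((E.filter (P x)).erase (Sym2.mk u x)).card :=
          Finset.card_pos.mpr ⟨_, hmem2⟩
        rw [Finset.card_erase_of_mem heX] at h2
        exact ⟨k - 1, by omega⟩
      · have h1' : Sym2.mk u v ∉ E.filter (P x) := by
          intro hmem
          obtain ⟨w', hw'eq, hw'0⟩ := (Finset.mem_filter.mp hmem).2
          rcases Sym2.eq_iff.mp hw'eq with ⟨h1, h2⟩ | ⟨h1, h2⟩
          · exact hv0 (h2 ▸ hw'0)
          · exact hxv h2.symm
        have h2' : Sym2.mk v w ∉ E.filter (P x) := by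
          intro hmem
          obtain ⟨w', hw'eq, hw'0⟩ := (Finset.mem_filter.mp hmem).2
          rcases Sym2.eq_iff.mp hw'eq with ⟨h1, h2⟩ | ⟨h1, h2⟩
          · exact hxv h1.symm
          · exact hv0 (h1 ▸ hw'0)
        have heq : (E1.erase (Sym2.mk v w)).filter (P x) = E.filter (P x) := by
          rw [Finset.filter_erase, hE1, Finset.filter_erase,
            Finset.erase_eq_of_notMem h1', Finset.erase_eq_of_notMem h2']
        rw [heq]
        exact hB x hx

lemma torAdj (m n : ℕ) (hm : 3 ≤ m) (hn : 3 ≤ n) (x w : ZMod m × ZMod n) :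
    (TorGraph m n).Adj x w ↔
      w = (x.1, x.2 + 1) ∨ w = (x.1 + 1, x.2) ∨ w = (x.1, x.2 - 1) ∨ w = (x.1 - 1, x.2) := by
  have h1m : (1 : ZMod m) ≠ 0 := one_ne_zero_zmod m (by omega)
  have h1n : (1 : ZMod n) ≠ 0 := one_ne_zero_zmod n (by omega)
  rw [TorGraph, SimpleGraph.fromRel_adj]
  constructor
  · rintro ⟨hne, ⟨⟨h1, h2⟩ | ⟨h1, h2⟩⟩ | ⟨⟨h1, h2⟩ | ⟨h1, h2⟩⟩⟩
    · exact Or.inl (by rw [Prod.ext_iff]; exact ⟨h1.symm, h2⟩)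
    · exact Or.inr (Or.inl (by rw [Prod.ext_iff]; exact ⟨h2, h1.symm⟩))
    · refine Or.inr (Or.inr (Or.inl ?_))
      rw [Prod.ext_iff]; exact ⟨h1, by rw [h2]; ring⟩
    · refine Or.inr (Or.inr (Or.inr ?_))
      rw [Prod.ext_iff]; exact ⟨by rw [h2]; ring, h1⟩
  · rintro (rfl | rfl | rfl | rfl)
    · refine ⟨?_, Or.inl (Or.inl ⟨rfl, rfl⟩)⟩
      simp [Prod.ext_iff, h1n, eq_comm, left_eq_add]
    · refine ⟨?_, Or.inl (Or.inr ⟨rfl, rfl⟩)⟩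
      simp [Prod.ext_iff, h1m, left_eq_add]
    · refine ⟨?_, Or.inr (Or.inl ⟨rfl, by ring⟩)⟩
      simp [Prod.ext_iff, eq_sub_iff_add_eq, add_eq_left, h1n]
    · refine ⟨?_, Or.inr (Or.inr ⟨rfl, by ring⟩)⟩
      simp [Prod.ext_iff, eq_sub_iff_add_eq, add_eq_left, h1m]


/-- If `m, n ≥ 3` and `gcd(m,n) > 1`, then Bob (the second player)
has a winning strategy in the feedback game on the toroidal grid graph `Q(m,n)`
with starting vertex `(0,0)`. -/
theorem feedback_bob_wins_toroidal_grid (m n : ℕ) (hm : 3 ≤ m) (hn : 3 ≤ n)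
    (h : 1 < Nat.gcd m n) :
    haveI : NeZero m := ⟨by omega⟩
    haveI : NeZero n := ⟨by omega⟩
    BobWins (TorGraph m n) (0, 0) := by
  haveI : NeZero m := ⟨by omega⟩
  haveI : NeZero n := ⟨by omega⟩
  set d := Nat.gcd m n with hdd
  haveI : Fact (1 < d) := ⟨h⟩
  have hdm : d ∣ m := Nat.gcd_dvd_left m n
  have hdn : d ∣ n := Nat.gcd_dvd_right m n
  set σ : ZMod m × ZMod n → ZMod d :=
    fun p => ZMod.castHom hdm (ZMod d) p.1 + ZMod.castHom hdn (ZMod d) p.2 with hσ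
  have h1m : (1 : ZMod m) ≠ 0 := one_ne_zero_zmod m (by omega)
  have h1n : (1 : ZMod n) ≠ 0 := one_ne_zero_zmod n (by omega)
  have h2m : (2 : ZMod m) ≠ 0 := two_ne_zero_zmod m hm
  have h2n : (2 : ZMod n) ≠ 0 := two_ne_zero_zmod n hn
  have hs1 : ∀ (a : ZMod m) (b : ZMod n), σ (a, b + 1) = σ (a, b) + 1 := by
    intro a b
    show ZMod.castHom hdm (ZMod d) a + ZMod.castHom hdn (ZMod d) (b + 1)
      = ZMod.castHom hdm (ZMod d) a + ZMod.castHom hdn (ZMod d) b + 1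
    rw [map_add, map_one]; ring
  have hs2 : ∀ (a : ZMod m) (b : ZMod n), σ (a + 1, b) = σ (a, b) + 1 := by
    intro a b
    show ZMod.castHom hdm (ZMod d) (a + 1) + ZMod.castHom hdn (ZMod d) b
      = ZMod.castHom hdm (ZMod d) a + ZMod.castHom hdn (ZMod d) b + 1
    rw [map_add, map_one]; ring
  have hs3 : ∀ (a : ZMod m) (b : ZMod n), σ (a, b - 1) = σ (a, b) - 1 := by
    intro a b
    show ZMod.castHom hdm (ZMod d) a + ZMod.castHom hdn (ZMod d) (b - 1)
      = ZMod.castHom hdm (ZMod d) a + ZMod.castHom hdn (ZMod d) b - 1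
    rw [map_sub, map_one]; ring
  have hs4 : ∀ (a : ZMod m) (b : ZMod n), σ (a - 1, b) = σ (a, b) - 1 := by
    intro a b
    show ZMod.castHom hdm (ZMod d) (a - 1) + ZMod.castHom hdn (ZMod d) b
      = ZMod.castHom hdm (ZMod d) a + ZMod.castHom hdn (ZMod d) b - 1
    rw [map_sub, map_one]; ring
  have hD : ∀ e ∈ (TorGraph m n).edgeSet.toFinite.toFinset, ∀ p q : ZMod m × ZMod n,
      e = Sym2.mk p q → σ q = σ p + 1 ∨ σ q = σ p - 1 := by
    intro e he p q hpq
    rw [hpq] at he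
    have hadj : (TorGraph m n).Adj p q :=
      (SimpleGraph.mem_edgeSet _).mp ((Set.Finite.mem_toFinset _).mp he)
    rcases (torAdj m n hm hn p q).mp hadj with rfl | rfl | rfl | rfl
    · left; rw [hs1]
    · left; rw [hs2]
    · right; rw [hs3]
    · right; rw [hs4]
  have hB : ∀ x : ZMod m × ZMod n, σ x ≠ 0 →
      Even (((TorGraph m n).edgeSet.toFinite.toFinset.filter
        (fun e => ∃ w, e = Sym2.mk x w ∧ σ w = 0)).card) := by
    intro x hx
    set a := ((x.1, x.2 + 1) : ZMod m × ZMod n) with ha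
    set b := ((x.1 + 1, x.2) : ZMod m × ZMod n) with hb
    set c := ((x.1, x.2 - 1) : ZMod m × ZMod n) with hc
    set e4 := ((x.1 - 1, x.2) : ZMod m × ZMod n) with he4
    have hxeta : ((x.1, x.2) : ZMod m × ZMod n) = x := rfl
    have hsa : σ a = σ x + 1 := by rw [ha, hs1, hxeta]
    have hsb : σ b = σ x + 1 := by rw [hb, hs2, hxeta]
    have hsc : σ c = σ x - 1 := by rw [hc, hs3, hxeta]
    have hse : σ e4 = σ x - 1 := by rw [he4, hs4, hxeta]
    -- distinctness
    have hab : a ≠ b := by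
      intro hcon; exact h1m (left_eq_add.mp (Prod.ext_iff.mp hcon).1)
    have hac : a ≠ c := by
      intro hcon; exact h2n (by linear_combination (Prod.ext_iff.mp hcon).2)
    have hae : a ≠ e4 := by
      intro hcon; exact h1n (by linear_combination (Prod.ext_iff.mp hcon).2)
    have hbc : b ≠ c := by
      intro hcon; exact h1m (by linear_combination (Prod.ext_iff.mp hcon).1)
    have hbe : b ≠ e4 := by
      intro hcon; exact h2m (by linear_combination (Prod.ext_iff.mp hcon).1)
    have hce : c ≠ e4 := by
      intro hcon; exact h1n (by linear_combination (-1 : ZMod n) * (Prod.ext_iff.mp hcon).2)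
    set N : Finset (ZMod m × ZMod n) := ({a, b, c, e4} : Finset _).filter (fun w => σ w = 0)
      with hN
    have himg : (TorGraph m n).edgeSet.toFinite.toFinset.filter
        (fun e => ∃ w, e = Sym2.mk x w ∧ σ w = 0)
        = N.image (fun w => Sym2.mk x w) := by
      ext e
      simp only [Finset.mem_filter, Finset.mem_image]
      constructor
      · rintro ⟨heE, w, rfl, hw0⟩
        refine ⟨w, Finset.mem_filter.mpr ⟨?_, hw0⟩, rfl⟩
        have hadj : (TorGraph m n).Adj x w :=
          (SimpleGraph.mem_edgeSet _).mp ((Set.Finite.mem_toFinset _).mp heE)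
        rcases (torAdj m n hm hn x w).mp hadj with rfl | rfl | rfl | rfl <;>
          simp [ha, hb, hc, he4]
      · rintro ⟨w, hwN, rfl⟩
        obtain ⟨hwmem, hw0⟩ := Finset.mem_filter.mp hwN
        refine ⟨?_, w, rfl, hw0⟩
        rw [Set.Finite.mem_toFinset, SimpleGraph.mem_edgeSet, torAdj m n hm hn]
        simpa [ha, hb, hc, he4] using hwmem
    have hinj : Set.InjOn (fun w => Sym2.mk x w) ↑N := by
      intro p _ q _ hpq
      rcases Sym2.eq_iff.mp hpq with ⟨_, h2⟩ | ⟨h1, h2⟩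
      · exact h2
      · exact h2.trans h1
    rw [himg, Finset.card_image_of_injOn hinj]
    by_cases hp : σ x + 1 = 0 <;> by_cases hq : σ x - 1 = 0
    · have : N = {a, b, c, e4} := by
        rw [hN]
        simp [Finset.filter_insert, Finset.filter_singleton, hsa, hsb, hsc, hse, hp, hq]
      rw [this]
      have h4 : ({a, b, c, e4} : Finset _).card = 4 := by
        rw [Finset.card_insert_of_notMem (by simp [hab, hac, hae]),
          Finset.card_insert_of_notMem (by simp [hbc, hbe]),
          Finset.card_insert_of_notMem (by simp [hce]), Finset.card_singleton]
      rw [h4]; exact ⟨2, rfl⟩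
    · have : N = {a, b} := by
        rw [hN]
        simp [Finset.filter_insert, Finset.filter_singleton, hsa, hsb, hsc, hse, hp, hq]
      rw [this]
      rw [Finset.card_insert_of_notMem (by simp [hab]), Finset.card_singleton]
      exact ⟨1, rfl⟩
    · have : N = {c, e4} := by
        rw [hN]
        simp [Finset.filter_insert, Finset.filter_singleton, hsa, hsb, hsc, hse, hp, hq]
      rw [this]
      rw [Finset.card_insert_of_notMem (by simp [hce]), Finset.card_singleton]
      exact ⟨1, rfl⟩
    · have : N = ∅ := by
        rw [hN]
        simp [Finset.filter_insert, Finset.filter_singleton, hsa, hsb, hsc, hse, hp, hq]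
      rw [this]; exact ⟨0, rfl⟩
  have hst : σ (0, 0) = 0 := by simp [hσ]
  show BobWins (TorGraph m n) (0, 0)
  unfold BobWins AliceWins
  refine bob_aux σ one_ne_zero (neg_ne_zero.mpr one_ne_zero) (0, 0) hst _ (0, 0) hst hD ?_
  intro x hx
  rw [Finset.filter_congr_decidable]
  exact hB x hx
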